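/- Let H be a Dedekind-finite monoid. Then P_fun(H) is a divisor-closed submonoid of P_fin(H): if X, Y, U, V are nonempty finite subsets of H with X = UYV and X contains a unit of H, then Y contains a unit of H. -/
import Mathlib


open Pointwise

lemma aux_df_left {H : Type*} [Monoid H]
    (hdf : ∀ x y : H, x * y = 1 → y * x = 1) {a b : H} (h : IsUnit (a * b)) :
    IsUnit a ∧ IsUnit b := by
  obtain ⟨c, hc⟩ := h
  have h1 : a * (b * ↑c⁻¹) = 1 := by
    rw [← mul_assoc, ← hc]; exact c.mul_inv
  have h2 : (b * ↑c⁻¹) * a = 1 := hdf _ _ h1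
  have ha : IsUnit a := isUnit_iff_exists.2 ⟨b * ↑c⁻¹, h1, h2⟩
  refine ⟨ha, ?_⟩
  obtain ⟨d, hd⟩ := ha
  have hb : b = ↑d⁻¹ * ↑c := by
    rw [hc, ← hd, ← mul_assoc, d.inv_mul, one_mul]
  rw [hb]
  exact (d⁻¹.isUnit).mul c.isUnit

/-- If `H` is a Dedekind-finite monoid, then the restricted power monoid `P_fun(H)` is a
divisor-closed submonoid of the power monoid `P_fin(H)`: if `X = U * Y * V` for nonempty
finite subsets `U, Y, V` of `H` and `X` contains a unit of `H`, then `Y` contains a unit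
of `H`. -/
theorem stmt_6 {H : Type*} [Monoid H] [DecidableEq H]
    (hdf : ∀ x y : H, x * y = 1 → y * x = 1) :
    ∀ X Y U V : Finset H, X.Nonempty → Y.Nonempty → U.Nonempty → V.Nonempty →
      X = U * Y * V → (∃ x ∈ X, IsUnit x) → ∃ y ∈ Y, IsUnit y := by
  intro X Y U V _ _ _ _ hX ⟨x, hxX, hx⟩
  rw [hX] at hxX
  obtain ⟨uy, huy, v, hv, rfl⟩ := Finset.mem_mul.1 hxX
  obtain ⟨u, hu, y, hy, rfl⟩ := Finset.mem_mul.1 huy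
  exact ⟨y, hy, ((aux_df_left hdf (aux_df_left hdf hx).1).2)⟩
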